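/- arXiv:1310.6993 — 3 statements merged into one kernel-verified Lean document; each statement's English description precedes it below -/
import Mathlib

section
/- Let k > 0, let n₀ and N be positive integers, let a₁, a₂, a₃ > 0, and let (ξ_n), (η_n), (ζ_n) be sequences of positive real numbers such that ξ_n ≤ ξ_{n−1}(1 + k·η_{n−1}) + k·ζ_n for all n ≥ n₀, and such that for every integer k₀ ≥ n₀ one has Σ_{n=k₀}^{N+k₀} k·η_n ≤ a₁, Σ_{n=k₀}^{N+k₀} k·ζ_n ≤ a₂, and Σ_{n=k₀}^{N+k₀} k·ξ_n ≤ a₃. Then ξ_n ≤ (a₃/(N·k) + a₂)·e^{a₁} for all n ≥ N + n₀. -/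
/-- **Discrete uniform Gronwall lemma** (Lemma 4 of the paper). -/
theorem discrete_uniform_gronwall (k : ℝ) (hk : 0 < k) (n₀ N : ℕ)
    (hn₀ : 0 < n₀) (hN : 0 < N)
    (a₁ a₂ a₃ : ℝ) (ha₁ : 0 < a₁) (ha₂ : 0 < a₂) (ha₃ : 0 < a₃)
    (ξ η ζ : ℕ → ℝ) (hξ : ∀ n, 0 < ξ n) (hη : ∀ n, 0 < η n) (hζ : ∀ n, 0 < ζ n)
    (hrec : ∀ n, n₀ ≤ n → ξ n ≤ ξ (n - 1) * (1 + k * η (n - 1)) + k * ζ n)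
    (hη' : ∀ k₀, n₀ ≤ k₀ → ∑ n ∈ Finset.Icc k₀ (N + k₀), k * η n ≤ a₁)
    (hζ' : ∀ k₀, n₀ ≤ k₀ → ∑ n ∈ Finset.Icc k₀ (N + k₀), k * ζ n ≤ a₂)
    (hξ' : ∀ k₀, n₀ ≤ k₀ → ∑ n ∈ Finset.Icc k₀ (N + k₀), k * ξ n ≤ a₃) :
    ∀ n, N + n₀ ≤ n → ξ n ≤ (a₃ / (N * k) + a₂) * Real.exp a₁ := by
  intro n hn
  set m₀ := n - N with hm₀
  have hNn : N ≤ n := le_trans (Nat.le_add_right _ _) hn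
  have hm₀n₀ : n₀ ≤ m₀ := by omega
  have hNm₀ : N + m₀ = n := by omega
  have hNk : (0:ℝ) < (N:ℝ) * k := by positivity
  -- find a small starting value
  have hexists : ∃ m ∈ Finset.Icc m₀ (n-1), ξ m ≤ a₃ / ((N:ℝ) * k) := by
    by_contra h
    push_neg at h
    have hne : (Finset.Icc m₀ (n-1)).Nonempty := by
      rw [Finset.nonempty_Icc]; omega
    have hcard : (Finset.Icc m₀ (n-1)).card = N := by
      rw [Nat.card_Icc]; omega
    have hlt : ∑ j ∈ Finset.Icc m₀ (n-1), k * (a₃ / ((N:ℝ)*k))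
        < ∑ j ∈ Finset.Icc m₀ (n-1), k * ξ j := by
      apply Finset.sum_lt_sum_of_nonempty hne
      intro j hj
      exact mul_lt_mul_of_pos_left (h j hj) hk
    rw [Finset.sum_const, hcard, nsmul_eq_mul] at hlt
    have heq : (N:ℝ) * (k * (a₃ / ((N:ℝ)*k))) = a₃ := by
      field_simp
    rw [heq] at hlt
    have hsub : ∑ j ∈ Finset.Icc m₀ (n-1), k * ξ j
        ≤ ∑ j ∈ Finset.Icc m₀ (N + m₀), k * ξ j := by
      apply Finset.sum_le_sum_of_subset_of_nonneg
      · intro x hx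
        simp only [Finset.mem_Icc] at hx ⊢
        omega
      · intro i _ _
        exact le_of_lt (mul_pos hk (hξ i))
    have := hξ' m₀ hm₀n₀
    linarith
  obtain ⟨m, hm, hmle⟩ := hexists
  simp only [Finset.mem_Icc] at hm
  have hmn₀ : n₀ ≤ m := le_trans hm₀n₀ hm.1
  -- iterated Gronwall inequality
  have key : ∀ d, ξ (m + d) ≤ (ξ m + ∑ j ∈ Finset.Ico (m+1) (m+d+1), k * ζ j)
      * ∏ j ∈ Finset.Ico m (m+d), (1 + k * η j) := by
    intro d
    induction d with
    | zero =>
      simp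
    | succ d ih =>
      have hprod1 : (1:ℝ) ≤ ∏ j ∈ Finset.Ico m (m+d+1), (1 + k * η j) := by
        calc (1:ℝ) = ∏ j ∈ Finset.Ico m (m+d+1), 1 := by simp
          _ ≤ ∏ j ∈ Finset.Ico m (m+d+1), (1 + k * η j) := by
              apply Finset.prod_le_prod
              · intro j _; norm_num
              · intro j _; nlinarith [hη j]
      have hfac : (0:ℝ) < 1 + k * η (m+d) := by nlinarith [hη (m+d)]
      have hrec' := hrec (m+d+1) (by omega)
      have hsub : m + d + 1 - 1 = m + d := by omega
      rw [hsub] at hrec'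
      have hprodsucc : ∏ j ∈ Finset.Ico m (m+d+1), (1 + k * η j)
          = (∏ j ∈ Finset.Ico m (m+d), (1 + k * η j)) * (1 + k * η (m+d)) :=
        Finset.prod_Ico_succ_top (by omega) _
      have hsumsucc : ∑ j ∈ Finset.Ico (m+1) (m+d+1+1), k * ζ j
          = (∑ j ∈ Finset.Ico (m+1) (m+d+1), k * ζ j) + k * ζ (m+d+1) :=
        Finset.sum_Ico_succ_top (by omega) _
      have hS : (0:ℝ) ≤ ∑ j ∈ Finset.Ico (m+1) (m+d+1), k * ζ j := by
        apply Finset.sum_nonneg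
        intro j _
        exact le_of_lt (mul_pos hk (hζ j))
      have h1 : ξ (m+d) * (1 + k * η (m+d))
          ≤ ((ξ m + ∑ j ∈ Finset.Ico (m+1) (m+d+1), k * ζ j)
            * ∏ j ∈ Finset.Ico m (m+d), (1 + k * η j)) * (1 + k * η (m+d)) :=
        mul_le_mul_of_nonneg_right ih (le_of_lt hfac)
      have h2 : k * ζ (m+d+1) ≤ k * ζ (m+d+1)
          * ∏ j ∈ Finset.Ico m (m+d+1), (1 + k * η j) := by
        nlinarith [mul_pos hk (hζ (m+d+1))]
      calc ξ (m + (d+1)) = ξ (m+d+1) := rfl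
        _ ≤ ξ (m+d) * (1 + k * η (m+d)) + k * ζ (m+d+1) := hrec'
        _ ≤ ((ξ m + ∑ j ∈ Finset.Ico (m+1) (m+d+1), k * ζ j)
              * ∏ j ∈ Finset.Ico m (m+d), (1 + k * η j)) * (1 + k * η (m+d))
            + k * ζ (m+d+1) * ∏ j ∈ Finset.Ico m (m+d+1), (1 + k * η j) := by
            linarith
        _ = (ξ m + ∑ j ∈ Finset.Ico (m+1) (m+d+1+1), k * ζ j)
              * ∏ j ∈ Finset.Ico m (m+d+1), (1 + k * η j) := by
            rw [hprodsucc, hsumsucc]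
            ring
  have hkey := key (n - m)
  rw [show m + (n - m) = n by omega] at hkey
  -- bound the sum of ζ's
  have hζbound : ∑ j ∈ Finset.Ico (m+1) (n+1), k * ζ j ≤ a₂ := by
    refine le_trans ?_ (hζ' m₀ hm₀n₀)
    apply Finset.sum_le_sum_of_subset_of_nonneg
    · intro x hx
      simp only [Finset.mem_Ico, Finset.mem_Icc] at hx ⊢
      omega
    · intro i _ _
      exact le_of_lt (mul_pos hk (hζ i))
  -- bound the product of (1 + kη)'s
  have hprodbound : ∏ j ∈ Finset.Ico m n, (1 + k * η j) ≤ Real.exp a₁ := by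
    have h1 : ∏ j ∈ Finset.Ico m n, (1 + k * η j)
        ≤ ∏ j ∈ Finset.Ico m n, Real.exp (k * η j) := by
      apply Finset.prod_le_prod
      · intro j _; nlinarith [hη j]
      · intro j _
        have := Real.add_one_le_exp (k * η j)
        linarith
    have h2 : ∏ j ∈ Finset.Ico m n, Real.exp (k * η j)
        = Real.exp (∑ j ∈ Finset.Ico m n, k * η j) := (Real.exp_sum _ _).symm
    have h3 : ∑ j ∈ Finset.Ico m n, k * η j ≤ a₁ := by
      refine le_trans ?_ (hη' m₀ hm₀n₀)
      apply Finset.sum_le_sum_of_subset_of_nonneg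
      · intro x hx
        simp only [Finset.mem_Ico, Finset.mem_Icc] at hx ⊢
        omega
      · intro i _ _
        exact le_of_lt (mul_pos hk (hη i))
    calc ∏ j ∈ Finset.Ico m n, (1 + k * η j)
        ≤ Real.exp (∑ j ∈ Finset.Ico m n, k * η j) := by rw [← h2]; exact h1
      _ ≤ Real.exp a₁ := Real.exp_le_exp.mpr h3
  have hfinal : ξ m + ∑ j ∈ Finset.Ico (m+1) (n+1), k * ζ j ≤ a₃ / ((N:ℝ)*k) + a₂ := by
    linarith
  have hpos1 : (0:ℝ) ≤ ξ m + ∑ j ∈ Finset.Ico (m+1) (n+1), k * ζ j := by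
    have := (hξ m).le
    have hS : (0:ℝ) ≤ ∑ j ∈ Finset.Ico (m+1) (n+1), k * ζ j :=
      Finset.sum_nonneg fun j _ => le_of_lt (mul_pos hk (hζ j))
    linarith
  calc ξ n ≤ (ξ m + ∑ j ∈ Finset.Ico (m+1) (n+1), k * ζ j)
        * ∏ j ∈ Finset.Ico m n, (1 + k * η j) := hkey
    _ ≤ (a₃ / ((N:ℝ)*k) + a₂) * Real.exp a₁ := by
        apply mul_le_mul hfinal hprodbound ?_ (by positivity)
        apply Finset.prod_nonneg
        intro j _
        nlinarith [hη j]
end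

section
/- Let g : ℝ → ℝ be continuously differentiable and suppose there exist γ > 0 and R > 0 such that g'(r) ≥ γ whenever |r| ≥ R. Then there exist constants c⋆ > 0 and C ≥ 0 such that g(r)·r ≥ (c⋆/2)·|g(r)|·(1 + |r|) − C for all r ∈ ℝ. -/
/-- The coercivity estimate (3.23) of the paper: if `g` is `C¹` and `g' ≥ γ > 0`
outside the compact interval `[-R, R]`, then there exist `c⋆ > 0` and `C ≥ 0` with
`g(r)·r ≥ (c⋆/2)·|g(r)|·(1 + |r|) − C` for all `r`. -/
theorem coercivity_estimate (g : ℝ → ℝ) (hg : ContDiff ℝ 1 g)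
    (γ R : ℝ) (hγ : 0 < γ) (hR : 0 < R)
    (hderiv : ∀ r : ℝ, R ≤ |r| → γ ≤ deriv g r) :
    ∃ cstar > 0, ∃ C ≥ 0, ∀ r : ℝ,
      g r * r ≥ cstar / 2 * |g r| * (1 + |r|) - C := by
  have hdg : Differentiable ℝ g := hg.differentiable one_ne_zero
  set h : ℝ → ℝ := fun r => g r - γ * r with hh
  have hdh : Differentiable ℝ h := hdg.sub (differentiable_id.const_mul γ)
  have hderivh : ∀ r : ℝ, deriv h r = deriv g r - γ := by
    intro r
    have := (((hdg r).hasDerivAt).sub ((hasDerivAt_id r).const_mul γ)).deriv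
    simp [hh] at this
    exact this
  -- monotone on [R, ∞)
  have hmono : MonotoneOn h (Set.Ici R) := by
    apply monotoneOn_of_deriv_nonneg (convex_Ici R) hdh.continuous.continuousOn
      (hdh.differentiableOn)
    intro x hx
    rw [interior_Ici] at hx
    have : R ≤ |x| := by
      rw [abs_of_pos (lt_trans hR hx)]; exact le_of_lt hx
    rw [hderivh]
    linarith [hderiv x this]
  have hmono' : MonotoneOn h (Set.Iic (-R)) := by
    apply monotoneOn_of_deriv_nonneg (convex_Iic (-R)) hdh.continuous.continuousOn
      (hdh.differentiableOn)
    intro x hx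
    rw [interior_Iic] at hx
    have : R ≤ |x| := by
      rw [abs_of_neg (by linarith [hx.out] : x < 0)]; linarith [hx.out]
    rw [hderivh]
    linarith [hderiv x this]
  set R₀ : ℝ := max 1 (max (R + |g R| / γ) (R + |g (-R)| / γ)) with hR₀
  have hR₀1 : (1:ℝ) ≤ R₀ := le_max_left _ _
  have hR₀R : R ≤ R₀ := by
    have : R + |g R| / γ ≤ R₀ := le_trans (le_max_left _ _) (le_max_right _ _)
    have h2 : 0 ≤ |g R| / γ := div_nonneg (abs_nonneg _) hγ.le
    linarith
  have hR₀R' : R + |g (-R)| / γ ≤ R₀ := le_trans (le_max_right _ _) (le_max_right _ _)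
  have hR₀Ra : R + |g R| / γ ≤ R₀ := le_trans (le_max_left _ _) (le_max_right _ _)
  -- sign of g far away
  have hpos : ∀ r : ℝ, R₀ ≤ r → 0 ≤ g r := by
    intro r hr
    have hRr : R ≤ r := le_trans hR₀R hr
    have := hmono (Set.mem_Ici.mpr le_rfl) (Set.mem_Ici.mpr hRr) hRr
    simp only [hh] at this
    -- g R - γ R ≤ g r - γ r
    have hrbig : R + |g R| / γ ≤ r := le_trans hR₀Ra hr
    have : g R + γ * (r - R) ≤ g r := by linarith
    have h3 : |g R| ≤ γ * (r - R) := by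
      have h4 : |g R| / γ ≤ r - R := by linarith
      calc |g R| = |g R| / γ * γ := by field_simp
        _ ≤ (r - R) * γ := mul_le_mul_of_nonneg_right h4 hγ.le
        _ = γ * (r - R) := mul_comm _ _
    nlinarith [neg_abs_le (g R)]
  have hneg : ∀ r : ℝ, r ≤ -R₀ → g r ≤ 0 := by
    intro r hr
    have hRr : r ≤ -R := by linarith
    have := hmono' (Set.mem_Iic.mpr hRr) (Set.mem_Iic.mpr le_rfl) hRr
    simp only [hh] at this
    have hrbig : r ≤ -(R + |g (-R)| / γ) := by linarith
    have : g r ≤ g (-R) + γ * (r + R) := by linarith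
    have h3 : γ * (r + R) ≤ -|g (-R)| := by
      have h4 : r + R ≤ -(|g (-R)| / γ) := by linarith
      have h5 : γ * (r + R) ≤ γ * (-(|g (-R)| / γ)) := mul_le_mul_of_nonneg_left h4 hγ.le
      have h6 : γ * (-(|g (-R)| / γ)) = -|g (-R)| := by field_simp
      linarith
    nlinarith [le_abs_self (g (-R))]
  -- compact part
  set F : ℝ → ℝ := fun r => 1 / 2 * |g r| * (1 + |r|) - g r * r with hF
  have hFcont : Continuous F := by
    apply Continuous.sub
    · exact (continuous_const.mul hg.continuous.abs).mul
        (continuous_const.add continuous_abs)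
    · exact hg.continuous.mul continuous_id
  obtain ⟨x₀, _, hx₀⟩ := isCompact_Icc.exists_isMaxOn
    (Set.nonempty_Icc.mpr (by linarith : -R₀ ≤ R₀)) hFcont.continuousOn
  refine ⟨1, one_pos, max (F x₀) 0, le_max_right _ _, fun r => ?_⟩
  have key : F r ≤ max (F x₀) 0 := by
    rcases le_or_gt (|r|) R₀ with hcase | hcase
    · exact le_trans (hx₀ (abs_le.mp hcase)) (le_max_left _ _)
    · refine le_trans ?_ (le_max_right _ _)
      rcases le_or_gt 0 r with hr0 | hr0
      · have hrR : R₀ ≤ r := by rw [abs_of_nonneg hr0] at hcase; linarith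
        have hg0 : 0 ≤ g r := hpos r hrR
        have h1r : 1 ≤ r := le_trans hR₀1 hrR
        simp only [hF]
        rw [abs_of_nonneg hg0, abs_of_nonneg hr0]
        nlinarith
      · have hrR : r ≤ -R₀ := by rw [abs_of_neg hr0] at hcase; linarith
        have hg0 : g r ≤ 0 := hneg r hrR
        have h1r : r ≤ -1 := by linarith
        simp only [hF]
        rw [abs_of_nonpos hg0, abs_of_neg hr0]
        nlinarith
  simp only [hF] at key
  have := key
  linarith [this]
end

section
/- Let g : ℝ → ℝ be continuously differentiable and suppose there exist γ > 0 and R > 0 such that g'(r) ≥ γ whenever |r| ≥ R. Let G(r) = ∫₀^r g(ζ) dζ. Then there exists a constant c₁ ≥ 0 such that |G(r)| ≤ |g(r)|·(1 + |r|) + c₁ for all r ∈ ℝ. -/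
open Set intervalIntegral

/-- If the derivative of a `C¹` function is at least `γ` on `[a,b]`, the function grows
at least linearly there. -/
lemma grow_aux (g : ℝ → ℝ) (hg : ContDiff ℝ 1 g) (γ a b : ℝ) (hab : a ≤ b)
    (h : ∀ x ∈ Set.Icc a b, γ ≤ deriv g x) : γ * (b - a) ≤ g b - g a := by
  have hc : Continuous (deriv g) := hg.continuous_deriv le_rfl
  have hint : IntervalIntegrable (deriv g) MeasureTheory.volume a b :=
    hc.intervalIntegrable a b
  have hftc : ∫ x in a..b, deriv g x = g b - g a :=
    intervalIntegral.integral_deriv_eq_sub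
      (fun x _ => (hg.differentiable one_ne_zero).differentiableAt) hint
  have hmono : ∫ x in a..b, γ ≤ ∫ x in a..b, deriv g x := by
    apply intervalIntegral.integral_mono_on hab (intervalIntegrable_const) hint
    exact h
  rw [hftc] at hmono
  simpa [mul_comm] using hmono

/-- Estimate (3.25) of the paper: if `g` is `C¹` and `g' ≥ γ > 0` outside the compact
interval `[-R, R]`, then the primitive `G(r) = ∫₀^r g` satisfies
`|G(r)| ≤ |g(r)|·(1 + |r|) + c₁` for some constant `c₁ ≥ 0` and all `r`. -/
theorem primitive_estimate (g : ℝ → ℝ) (hg : ContDiff ℝ 1 g)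
    (γ R : ℝ) (hγ : 0 < γ) (hR : 0 < R)
    (hderiv : ∀ r : ℝ, R ≤ |r| → γ ≤ deriv g r) :
    ∃ c₁ ≥ (0 : ℝ), ∀ r : ℝ,
      |∫ ζ in (0 : ℝ)..r, g ζ| ≤ |g r| * (1 + |r|) + c₁ := by
  have hgc : Continuous g := hg.continuous
  set G : ℝ → ℝ := fun r => ∫ ζ in (0 : ℝ)..r, g ζ with hGdef
  have hGc : Continuous G :=
    intervalIntegral.continuous_primitive (fun a b => hgc.intervalIntegrable a b) 0
  set M : ℝ := R + 2 * (|g R| + |g (-R)| + 1) / γ with hMdef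
  have hnum : 0 ≤ 2 * (|g R| + |g (-R)| + 1) := by positivity
  have hMR : R ≤ M := by
    have h : 0 ≤ 2 * (|g R| + |g (-R)| + 1) / γ := div_nonneg hnum hγ.le
    rw [hMdef]; linarith
  have hM0 : 0 ≤ M := le_trans hR.le hMR
  obtain ⟨C, hC⟩ :=
    (isCompact_Icc : IsCompact (Set.Icc (-M) M)).exists_bound_of_continuousOn
      hGc.continuousOn
  have hC0 : 0 ≤ C := by
    have := hC 0 ⟨by linarith, hM0⟩
    simpa using le_trans (norm_nonneg _) this
  refine ⟨C, hC0, fun r => ?_⟩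
  have habsG : ∀ x ∈ Set.Icc (-M) M, |G x| ≤ C := by
    intro x hx; simpa [Real.norm_eq_abs] using hC x hx
  have hrhs0 : 0 ≤ |g r| * (1 + |r|) := by positivity
  rcases le_or_gt |r| M with hsmall | hbig
  · have : |G r| ≤ C := habsG r ⟨neg_le_of_abs_le hsmall, le_of_abs_le hsmall⟩
    linarith
  · rcases (lt_abs.mp hbig) with hpos | hneg
    · -- r > M, in particular r > R
      have hrR : R ≤ r := le_trans hMR hpos.le
      -- growth on [R, r]
      have hgrow : ∀ a b : ℝ, R ≤ a → a ≤ b → γ * (b - a) ≤ g b - g a := by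
        intro a b ha hab
        refine grow_aux g hg γ a b hab fun x hx => hderiv x ?_
        have : R ≤ x := le_trans ha hx.1
        rwa [abs_of_nonneg (le_trans hR.le this)]
      have hgr_big : |g R| ≤ g r := by
        have h1 := hgrow R r le_rfl hrR
        have h2 : γ * (M - R) ≤ γ * (r - R) := by
          apply mul_le_mul_of_nonneg_left _ hγ.le
          linarith
        have h3 : γ * (M - R) = 2 * (|g R| + |g (-R)| + 1) := by
          rw [hMdef]; field_simp; ring
        have h4 : -|g R| ≤ g R := neg_abs_le _
        nlinarith [abs_nonneg (g R), abs_nonneg (g (-R))]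
      have hgr0 : 0 ≤ g r := le_trans (abs_nonneg _) hgr_big
      -- bound g on (R, r]
      have hbound : ∀ ζ ∈ Set.uIoc R r, ‖g ζ‖ ≤ |g r| := by
        intro ζ hζ
        rw [Set.uIoc_of_le hrR] at hζ
        have h1 : g R ≤ g ζ := by nlinarith [hgrow R ζ le_rfl hζ.1.le, hγ.le, hζ.1.le]
        have h2 : g ζ ≤ g r := by nlinarith [hgrow ζ r hζ.1.le hζ.2, hγ.le, hζ.2]
        rw [Real.norm_eq_abs, abs_of_nonneg hgr0, abs_le]
        constructor
        · have : -|g R| ≤ g R := neg_abs_le _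
          linarith
        · exact h2
      have hsplit : G r = G R + ∫ ζ in R..r, g ζ := by
        rw [hGdef]
        exact (intervalIntegral.integral_add_adjacent_intervals
          (hgc.intervalIntegrable 0 R) (hgc.intervalIntegrable R r)).symm
      have hint_bound : |∫ ζ in R..r, g ζ| ≤ |g r| * |r - R| := by
        simpa [Real.norm_eq_abs] using
          intervalIntegral.norm_integral_le_of_norm_le_const hbound
      have hGR : |G R| ≤ C := habsG R ⟨by linarith, hMR⟩
      have hrabs : |r| = r := abs_of_nonneg (le_trans hM0 hpos.le)
      have h5 : |r - R| ≤ 1 + |r| := by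
        rw [abs_of_nonneg (by linarith : (0:ℝ) ≤ r - R), hrabs]; linarith
      calc |G r| ≤ |G R| + |∫ ζ in R..r, g ζ| := by
            rw [hsplit]; exact abs_add_le _ _
        _ ≤ C + |g r| * (1 + |r|) := by
            have := mul_le_mul_of_nonneg_left h5 (abs_nonneg (g r))
            linarith [le_trans hint_bound this]
        _ = |g r| * (1 + |r|) + C := by ring
    · -- r < -M
      have hrR : r ≤ -R := by linarith
      have hgrow : ∀ a b : ℝ, a ≤ b → b ≤ -R → γ * (b - a) ≤ g b - g a := by
        intro a b hab hb
        refine grow_aux g hg γ a b hab fun x hx => hderiv x ?_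
        have hx2 : x ≤ -R := le_trans hx.2 hb
        rw [abs_of_nonpos (by linarith)]; linarith
      have hgr_small : g r ≤ -|g (-R)| := by
        have h1 := hgrow r (-R) hrR le_rfl
        have h2 : γ * (-r - R) ≥ γ * (M - R) := by
          apply mul_le_mul_of_nonneg_left _ hγ.le
          linarith
        have h3 : γ * (M - R) = 2 * (|g R| + |g (-R)| + 1) := by
          rw [hMdef]; field_simp; ring
        have h4 : g (-R) ≤ |g (-R)| := le_abs_self _
        nlinarith [abs_nonneg (g R), abs_nonneg (g (-R))]
      have hgr0 : g r ≤ 0 := le_trans hgr_small (neg_nonpos_of_nonneg (abs_nonneg _))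
      have hbound : ∀ ζ ∈ Set.uIoc r (-R), ‖g ζ‖ ≤ |g r| := by
        intro ζ hζ
        rw [Set.uIoc_of_le hrR] at hζ
        have h1 : g r ≤ g ζ := by nlinarith [hgrow r ζ hζ.1.le hζ.2, hγ.le, hζ.1.le]
        have h2 : g ζ ≤ g (-R) := by nlinarith [hgrow ζ (-R) hζ.2 le_rfl, hγ.le, hζ.2]
        rw [Real.norm_eq_abs, abs_of_nonpos hgr0, abs_le]
        constructor
        · linarith
        · have : g (-R) ≤ |g (-R)| := le_abs_self _
          linarith
      have hsplit : G r = G (-R) - ∫ ζ in r..(-R), g ζ := by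
        have h := intervalIntegral.integral_add_adjacent_intervals
          (μ := MeasureTheory.volume)
          (hgc.intervalIntegrable 0 r) (hgc.intervalIntegrable r (-R))
        show (∫ ζ in (0:ℝ)..r, g ζ) = (∫ ζ in (0:ℝ)..(-R), g ζ) - ∫ ζ in r..(-R), g ζ
        linarith
      have hint_bound : |∫ ζ in r..(-R), g ζ| ≤ |g r| * |(-R) - r| := by
        simpa [Real.norm_eq_abs] using
          intervalIntegral.norm_integral_le_of_norm_le_const hbound
      have hGR : |G (-R)| ≤ C := habsG (-R) ⟨by linarith, by linarith⟩
      have hrabs : |r| = -r := abs_of_nonpos (by linarith)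
      have h5 : |(-R) - r| ≤ 1 + |r| := by
        rw [abs_of_nonneg (by linarith : (0:ℝ) ≤ -R - r), hrabs]; linarith
      calc |G r| ≤ |G (-R)| + |∫ ζ in r..(-R), g ζ| := by
            rw [hsplit]
            simpa [sub_eq_add_neg, abs_neg] using
              abs_add_le (G (-R)) (-(∫ ζ in r..(-R), g ζ))
        _ ≤ C + |g r| * (1 + |r|) := by
            have := mul_le_mul_of_nonneg_left h5 (abs_nonneg (g r))
            linarith [le_trans hint_bound this]
        _ = |g r| * (1 + |r|) + C := by ring
end
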